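/- Let Σ ∈ ℝ^{d×d} be symmetric positive definite, let μ_1,…,μ_C ∈ ℝ^d be distinct, define ρ_{ij}² = ‖μ_i−μ_j‖²_{Σ⁻¹}, ρ_* = min_{i≠j} ρ_{ij} > 0, and for fixed i let Δ_{ij}(x) = ‖x−μ_j‖²_{Σ⁻¹} − ‖x−μ_i‖²_{Σ⁻¹}. Then there is an absolute constant c > 0 such that for x ~ N(μ_i, Σ), the event { Δ_{ij}(x) ≥ ρ_*²/2 for all j ≠ i } has probability at least 1 − (C−1)·exp(−c·ρ_*²). -/

import Mathlib

/-!
Statement 13: with probability at least 1 − (C−1)exp(−c·ρ_*²) under x ~ N(μ_i, Σ),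
every log-likelihood-ratio statistic Δ_{ij}(x), j ≠ i, is at least ρ_*²/2.
-/

open MeasureTheory ProbabilityTheory Real Finset
open scoped ENNReal

noncomputable section

abbrev E (d : ℕ) := EuclideanSpace ℝ (Fin d)

/-- Mahalanobis-type quadratic form vᵀAv. -/
def quadForm {d : ℕ} (A : Matrix (Fin d) (Fin d) ℝ) (v : E d) : ℝ :=
  ∑ a : Fin d, ∑ b : Fin d, v a * A a b * v b

/-- Gaussian measure N(ν, S) on ℝ^d for positive definite S, via its Lebesgue density. -/
def gaussianE (d : ℕ) (ν : E d) (S : Matrix (Fin d) (Fin d) ℝ) : Measure (E d) :=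
  volume.withDensity fun x =>
    ENNReal.ofReal
      ((2 * π) ^ (-(d : ℝ) / 2) * S.det ^ (-(1 : ℝ) / 2) *
        Real.exp (-(1 / 2) * quadForm S⁻¹ (x - ν)))

/-- ρ_*² = min_{i≠j} ‖μ_i − μ_j‖²_{Σ⁻¹}. -/
def rhoStarSq {d C : ℕ} (S : Matrix (Fin d) (Fin d) ℝ) (μ : Fin C → E d) : ℝ :=
  sInf ((fun p : Fin C × Fin C => quadForm S⁻¹ (μ p.1 - μ p.2)) '' {p | p.1 ≠ p.2})

namespace S13
variable {d : ℕ} {A : Matrix (Fin d) (Fin d) ℝ}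

def bil (A : Matrix (Fin d) (Fin d) ℝ) (x y : E d) : ℝ :=
  ∑ a : Fin d, ∑ b : Fin d, x a * A a b * y b

lemma bil_symm (hA : A.transpose = A) (x y : E d) : bil A y x = bil A x y := by
  unfold bil
  rw [Finset.sum_comm]
  refine Finset.sum_congr rfl fun a _ => Finset.sum_congr rfl fun b _ => ?_
  have h : A b a = A a b :=
    (congrFun (congrFun hA b) a).symm.trans (Matrix.transpose_apply A b a)
  rw [h]; ring

lemma quadForm_sub (hA : A.transpose = A) (x y : E d) :
    quadForm A (x - y) = quadForm A x - 2 * bil A x y + quadForm A y := by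
  unfold quadForm
  have h : ∀ a b : Fin d, (x - y) a * A a b * (x - y) b
      = x a * A a b * x b - x a * A a b * y b - y a * A a b * x b + y a * A a b * y b := by
    intro a b
    have hx : (x - y) a = x a - y a := rfl
    have hy : (x - y) b = x b - y b := rfl
    rw [hx, hy]; ring
  simp_rw [h, Finset.sum_add_distrib, Finset.sum_sub_distrib]
  have : (∑ a : Fin d, ∑ b : Fin d, y a * A a b * x b) = bil A x y := bil_symm hA x y
  rw [this]
  unfold bil
  ring

lemma bil_smul_right (A : Matrix (Fin d) (Fin d) ℝ) (c : ℝ) (x y : E d) :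
    bil A x (c • y) = c * bil A x y := by
  unfold bil
  simp_rw [Finset.mul_sum]
  refine Finset.sum_congr rfl fun a _ => Finset.sum_congr rfl fun b _ => ?_
  have : (c • y) b = c * y b := rfl
  rw [this]; ring

lemma quadForm_smul (A : Matrix (Fin d) (Fin d) ℝ) (c : ℝ) (y : E d) :
    quadForm A (c • y) = c ^ 2 * quadForm A y := by
  unfold quadForm
  simp_rw [Finset.mul_sum]
  refine Finset.sum_congr rfl fun a _ => Finset.sum_congr rfl fun b _ => ?_
  have h1 : (c • y) a = c * y a := rfl
  have h2 : (c • y) b = c * y b := rfl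
  rw [h1, h2]; ring

lemma quadForm_eq_dot (A : Matrix (Fin d) (Fin d) ℝ) (v : E d) :
    quadForm A v = dotProduct (fun a => v a) (A.mulVec fun a => v a) := by
  unfold quadForm
  simp only [dotProduct, Matrix.mulVec, Finset.mul_sum]
  exact Finset.sum_congr rfl fun a _ => Finset.sum_congr rfl fun b _ => by ring

lemma quadForm_nonneg (hA : A.PosSemidef) (v : E d) : 0 ≤ quadForm A v := by
  have h := hA.dotProduct_mulVec_nonneg (fun a => v a)
  rw [quadForm_eq_dot]
  simpa using h

lemma quadForm_continuous (A : Matrix (Fin d) (Fin d) ℝ) :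
    Continuous (fun v : E d => quadForm A v) := by
  unfold quadForm
  refine continuous_finset_sum _ fun a _ => continuous_finset_sum _ fun b _ => ?_
  have hva : Continuous fun v : E d => v a := by
    exact (continuous_apply a).comp (PiLp.continuous_ofLp 2 _)
  have hvb : Continuous fun v : E d => v b := by
    exact (continuous_apply b).comp (PiLp.continuous_ofLp 2 _)
  exact (hva.mul continuous_const).mul hvb


open scoped MatrixOrder in
/-- The Gaussian density integrates to 1. -/
lemma gauss_norm (S : Matrix (Fin d) (Fin d) ℝ) (hS : S.PosDef) (w : E d) :
    (∫⁻ x : E d, ENNReal.ofReal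
      ((2 * π) ^ (-(d : ℝ) / 2) * S.det ^ (-(1 : ℝ) / 2) *
        Real.exp (-(1 / 2) * quadForm S⁻¹ (x - w)))) = 1 := by
  classical
  have hA : (S⁻¹).PosDef := hS.inv
  set A := S⁻¹ with hAdef
  set B := CFC.sqrt A with hBdef
  have hB : B.PosSemidef := Matrix.nonneg_iff_posSemidef.mp (CFC.sqrt_nonneg A)
  have hBB : B * B = A := CFC.sqrt_mul_sqrt_self A hA.posSemidef.nonneg
  have hBsym : B.transpose = B := by
    ext a b
    have h := congrFun (congrFun hB.1 a) b
    simpa [Matrix.conjTranspose_apply] using h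
  -- determinant facts
  have hSdet : 0 < S.det := hS.det_pos
  have hbnn : 0 ≤ B.det := by
    rw [hB.1.det_eq_prod_eigenvalues]
    exact Finset.prod_nonneg fun i _ => by simpa using hB.eigenvalues_nonneg i
  have hb2 : B.det * B.det = S.det⁻¹ := by
    rw [← Matrix.det_mul, hBB, hAdef, Matrix.det_nonsing_inv,
      Ring.inverse_eq_inv]
  have hbval : B.det = (Real.sqrt S.det)⁻¹ := by
    rw [← Real.sqrt_mul_self hbnn, hb2, Real.sqrt_inv]
  have hbpos : 0 < B.det := by
    rw [hbval]
    exact inv_pos.mpr (Real.sqrt_pos.mpr hSdet)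
  -- the linear map
  set T : E d →ₗ[ℝ] E d := Matrix.toEuclideanLin B with hTdef
  have hdetT : LinearMap.det T = B.det := by
    rw [hTdef, Matrix.toEuclideanLin_eq_toLin, LinearMap.det_toLin]
  have hdetT0 : LinearMap.det T ≠ 0 := by rw [hdetT]; exact ne_of_gt hbpos
  have hTmeas : Measurable T := T.continuous_of_finiteDimensional.measurable
  -- quadratic form as norm squared
  have hq : ∀ x : E d, quadForm A x = ‖T x‖ ^ 2 := by
    intro x
    have hTx : ∀ a, T x a = B.mulVec (fun i => x i) a := fun a => rfl
    have hnorm : ‖T x‖ ^ 2 = ∑ a : Fin d, (T x a) ^ 2 := by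
      rw [EuclideanSpace.norm_eq]
      rw [Real.sq_sqrt (Finset.sum_nonneg fun a _ => sq_nonneg _)]
      exact Finset.sum_congr rfl fun a _ => by rw [Real.norm_eq_abs, sq_abs]
    rw [hnorm, quadForm_eq_dot]
    have h1 : A.mulVec (fun a => x a) = B.mulVec (B.mulVec (fun a => x a)) := by
      rw [Matrix.mulVec_mulVec, hBB]
    rw [h1]
    rw [Matrix.dotProduct_mulVec]
    have h2 : Matrix.vecMul (fun a => x a) B = B.mulVec (fun a => x a) := by
      conv_lhs => rw [← hBsym]
      rw [Matrix.vecMul_transpose]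
    rw [h2]
    unfold dotProduct
    exact Finset.sum_congr rfl fun a _ => by rw [hTx, sq]
  -- base Gaussian integral
  have h2pi : (0:ℝ) < 2 * π := by positivity
  have hint : Integrable (fun y : E d => Real.exp (-(1/2) * ‖y‖ ^ 2)) := by
    have hc := GaussianFourier.integrable_cexp_neg_mul_sq_norm_add (V := E d)
      (b := ((1/2 : ℝ) : ℂ)) (by norm_num) 0 0
    refine hc.norm.congr (Filter.Eventually.of_forall fun v => ?_)
    simp [Complex.norm_exp, ← Complex.ofReal_pow]
  have hgmeas : Measurable fun y : E d => ENNReal.ofReal (Real.exp (-(1/2) * ‖y‖ ^ 2)) := by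
    exact (ENNReal.continuous_ofReal.comp
      (Real.continuous_exp.comp (continuous_const.mul (continuous_norm.pow 2)))).measurable
  have hJ : (∫⁻ y : E d, ENNReal.ofReal (Real.exp (-(1/2) * ‖y‖ ^ 2)))
      = ENNReal.ofReal ((2 * π) ^ ((d : ℝ) / 2)) := by
    rw [← ofReal_integral_eq_lintegral_ofReal hint
      (Filter.Eventually.of_forall fun y => (Real.exp_pos _).le)]
    congr 1
    have := GaussianFourier.integral_rexp_neg_mul_sq_norm (V := E d) (b := (1/2 : ℝ)) (by norm_num)
    rw [this, show (π / (1/2:ℝ)) = 2*π by ring, finrank_euclideanSpace_fin]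
  -- change of variables
  have hCoV : (∫⁻ x : E d, ENNReal.ofReal (Real.exp (-(1/2) * quadForm A x)))
      = ENNReal.ofReal (B.det)⁻¹ * ENNReal.ofReal ((2 * π) ^ ((d : ℝ) / 2)) := by
    have h1 : (∫⁻ x : E d, ENNReal.ofReal (Real.exp (-(1/2) * quadForm A x)))
        = ∫⁻ x : E d, ENNReal.ofReal (Real.exp (-(1/2) * ‖T x‖ ^ 2)) := by
      simp_rw [hq]
    rw [h1, ← lintegral_map hgmeas hTmeas,
      Measure.map_linearMap_addHaar_eq_smul_addHaar volume hdetT0, lintegral_smul_measure, hJ, hdetT,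
      abs_of_pos (inv_pos.mpr hbpos), smul_eq_mul]
  -- translation invariance
  have htrans : (∫⁻ x : E d, ENNReal.ofReal (Real.exp (-(1/2) * quadForm A (x - w))))
      = ∫⁻ x : E d, ENNReal.ofReal (Real.exp (-(1/2) * quadForm A x)) := by
    have hmp : MeasurePreserving (fun x : E d => x + (-w)) volume volume :=
      measurePreserving_add_right volume (-w)
    have hmeas : Measurable fun x : E d => ENNReal.ofReal (Real.exp (-(1/2) * quadForm A x)) :=
      (ENNReal.continuous_ofReal.comp
        (Real.continuous_exp.comp (continuous_const.mul (quadForm_continuous A)))).measurable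
    simp_rw [sub_eq_add_neg]
    exact hmp.lintegral_comp hmeas
  -- assemble
  have hk0 : 0 ≤ (2 * π) ^ (-(d : ℝ) / 2) * S.det ^ (-(1 : ℝ) / 2) := by positivity
  calc (∫⁻ x : E d, ENNReal.ofReal
        ((2 * π) ^ (-(d : ℝ) / 2) * S.det ^ (-(1 : ℝ) / 2) *
          Real.exp (-(1 / 2) * quadForm S⁻¹ (x - w))))
      = ∫⁻ x : E d, ENNReal.ofReal ((2 * π) ^ (-(d : ℝ) / 2) * S.det ^ (-(1 : ℝ) / 2)) *
          ENNReal.ofReal (Real.exp (-(1 / 2) * quadForm A (x - w))) := by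
        simp_rw [ENNReal.ofReal_mul hk0]
        rfl
    _ = ENNReal.ofReal ((2 * π) ^ (-(d : ℝ) / 2) * S.det ^ (-(1 : ℝ) / 2)) *
          ∫⁻ x : E d, ENNReal.ofReal (Real.exp (-(1 / 2) * quadForm A (x - w))) :=
        lintegral_const_mul' _ _ ENNReal.ofReal_ne_top
    _ = ENNReal.ofReal ((2 * π) ^ (-(d : ℝ) / 2) * S.det ^ (-(1 : ℝ) / 2)) *
          (ENNReal.ofReal (B.det)⁻¹ * ENNReal.ofReal ((2 * π) ^ ((d : ℝ) / 2))) := by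
        rw [htrans, hCoV]
    _ = 1 := by
        rw [← ENNReal.ofReal_mul (by positivity), ← ENNReal.ofReal_mul (by positivity)]
        rw [ENNReal.ofReal_eq_one]
        have e1 : (2 * π) ^ (-(d : ℝ) / 2) * (2 * π) ^ ((d : ℝ) / 2) = 1 := by
          rw [← Real.rpow_add h2pi,
            show (-(d:ℝ)/2 + (d:ℝ)/2) = 0 by ring, Real.rpow_zero]
        have e2 : S.det ^ (-(1 : ℝ) / 2) * (B.det)⁻¹ = 1 := by
          rw [hbval, inv_inv]
          rw [show (-(1:ℝ)/2) = -(1/2) by norm_num, Real.rpow_neg hSdet.le,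
            ← Real.sqrt_eq_rpow]
          field_simp
        calc (2 * π) ^ (-(d : ℝ) / 2) * S.det ^ (-(1 : ℝ) / 2) * ((B.det)⁻¹ * (2 * π) ^ ((d : ℝ) / 2))
            = ((2 * π) ^ (-(d : ℝ) / 2) * (2 * π) ^ ((d : ℝ) / 2)) *
              (S.det ^ (-(1 : ℝ) / 2) * (B.det)⁻¹) := by ring
          _ = 1 := by rw [e1, e2, mul_one]


lemma asym (S : Matrix (Fin d) (Fin d) ℝ) (hS : S.PosDef) : (S⁻¹).transpose = S⁻¹ := by
  have h := hS.inv.1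
  ext a b
  have h2 := congrFun (congrFun h a) b
  simpa [Matrix.conjTranspose_apply] using h2

/-- Chernoff bound for a single alternative. -/
lemma bad_bound (S : Matrix (Fin d) (Fin d) ℝ) (hS : S.PosDef) (μi μj : E d) (ρ : ℝ)
    (hρ0 : 0 ≤ ρ) (hρ : ρ ≤ quadForm S⁻¹ (μj - μi)) :
    gaussianE d μi S {x : E d | quadForm S⁻¹ (x - μj) - quadForm S⁻¹ (x - μi) < ρ / 2}
      ≤ ENNReal.ofReal (Real.exp (-(ρ / 32))) := by
  classical
  set A := S⁻¹ with hAdef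
  have hAsym : A.transpose = A := asym S hS
  set v : E d := μj - μi with hvdef
  set R : ℝ := quadForm A v with hRdef
  have hRρ : ρ ≤ R := hρ
  set k : ℝ := (2 * π) ^ (-(d : ℝ) / 2) * S.det ^ (-(1 : ℝ) / 2) with hkdef
  have hk0 : 0 ≤ k := by
    rw [hkdef]
    exact mul_nonneg (Real.rpow_nonneg (by positivity) _) (Real.rpow_nonneg hS.det_pos.le _)
  set dens : E d → ℝ≥0∞ := fun x => ENNReal.ofReal (k * Real.exp (-(1 / 2) * quadForm A (x - μi)))
    with hdens
  set Δ : E d → ℝ := fun x => quadForm A (x - μj) - quadForm A (x - μi) with hΔ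
  have hΔcont : Continuous Δ := by
    exact ((quadForm_continuous A).comp (continuous_id.sub continuous_const)).sub
      ((quadForm_continuous A).comp (continuous_id.sub continuous_const))
  have hbadmeas : MeasurableSet {x : E d | Δ x < ρ / 2} :=
    (hΔcont.measurable measurableSet_Iio : _)
  set C : ℝ := ρ / 16 - R / 8 + R / 32 with hC
  set w' : E d := μi + (1/4 : ℝ) • v with hw'
  -- pointwise identity
  have key : ∀ x : E d,
      dens x * ENNReal.ofReal (Real.exp ((1/8) * (ρ/2 - Δ x)))
        = ENNReal.ofReal (Real.exp C) *
            ENNReal.ofReal (k * Real.exp (-(1 / 2) * quadForm A (x - w'))) := by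
    intro x
    rw [hdens]
    rw [← ENNReal.ofReal_mul (by positivity), ← ENNReal.ofReal_mul (by positivity)]
    congr 1
    have e1 : x - μj = (x - μi) - v := by rw [hvdef]; abel
    have e2 : x - w' = (x - μi) - (1/4 : ℝ) • v := by rw [hw']; abel
    rw [hΔ]
    simp only [e1, e2]
    rw [quadForm_sub hAsym (x - μi) v,
      quadForm_sub hAsym (x - μi) ((1/4 : ℝ) • v),
      bil_smul_right, quadForm_smul]
    rw [← hRdef]
    set P := quadForm A (x - μi) with hP
    set Q := bil A (x - μi) v with hQ
    have h3 : (-(1/2) * P) + (1/8 * (ρ/2 - (P - 2*Q + R - P)))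
        = C + (-(1/2) * (P - 2*(1/4*Q) + (1/4)^2 * R)) := by rw [hC]; ring
    calc k * rexp (-(1/2) * P) * rexp (1/8 * (ρ/2 - (P - 2*Q + R - P)))
        = k * rexp ((-(1/2) * P) + (1/8 * (ρ/2 - (P - 2*Q + R - P)))) := by
          rw [Real.exp_add]; ring
      _ = k * rexp (C + (-(1/2) * (P - 2*(1/4*Q) + (1/4)^2 * R))) := by rw [h3]
      _ = rexp C * (k * rexp (-(1/2) * (P - 2*(1/4*Q) + (1/4)^2 * R))) := by
          rw [Real.exp_add]; ring
  -- the chain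
  have step1 : gaussianE d μi S {x : E d | Δ x < ρ / 2}
      ≤ ∫⁻ x, dens x * ENNReal.ofReal (Real.exp ((1/8) * (ρ/2 - Δ x))) := by
    rw [gaussianE, withDensity_apply _ hbadmeas]
    refine le_trans (setLIntegral_mono' hbadmeas fun x hx => ?_)
      (setLIntegral_le_lintegral _ _)
    have h1 : (1 : ℝ≥0∞) ≤ ENNReal.ofReal (Real.exp ((1/8) * (ρ/2 - Δ x))) := by
      rw [← ENNReal.ofReal_one]
      refine ENNReal.ofReal_le_ofReal (Real.one_le_exp ?_)
      have : Δ x < ρ / 2 := hx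
      nlinarith
    calc ENNReal.ofReal (k * Real.exp (-(1 / 2) * quadForm A (x - μi)))
        = dens x * 1 := by rw [mul_one]
      _ ≤ dens x * ENNReal.ofReal (Real.exp ((1/8) * (ρ/2 - Δ x))) := mul_le_mul_right h1 _
  have step2 : (∫⁻ x, dens x * ENNReal.ofReal (Real.exp ((1/8) * (ρ/2 - Δ x))))
      = ENNReal.ofReal (Real.exp C) := by
    simp_rw [key]
    rw [lintegral_const_mul' _ _ ENNReal.ofReal_ne_top]
    rw [hkdef]
    rw [gauss_norm S hS w', mul_one]
  refine le_trans step1 (le_trans step2.le ?_)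
  refine ENNReal.ofReal_le_ofReal (Real.exp_le_exp.mpr ?_)
  rw [hC]
  linarith

end S13

open S13

/-- there is an absolute constant c > 0 such that the event
{Δ_{ij}(x) ≥ ρ_*²/2 for all j ≠ i} has probability at least 1 − (C−1)exp(−c·ρ_*²). -/
theorem llr_separation_event_probability :
    ∃ c : ℝ, 0 < c ∧
      ∀ (d C : ℕ), 1 ≤ d → 2 ≤ C →
        ∀ (S : Matrix (Fin d) (Fin d) ℝ), S.PosDef →
          ∀ (μ : Fin C → E d), (∀ i j : Fin C, i ≠ j → μ i ≠ μ j) →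
            ∀ i : Fin C,
              ENNReal.ofReal
                  (1 - ((C : ℝ) - 1) * Real.exp (-(c * rhoStarSq S μ))) ≤
                gaussianE d (μ i) S
                  {x | ∀ j : Fin C, j ≠ i →
                    rhoStarSq S μ / 2 ≤
                      quadForm S⁻¹ (x - μ j) - quadForm S⁻¹ (x - μ i)} := by
  classical
  refine ⟨1/32, by norm_num, ?_⟩
  intro d C hd hC S hS μ hμ i
  set ρ : ℝ := rhoStarSq S μ with hρdef
  have hpsd : (S⁻¹).PosSemidef := hS.inv.posSemidef
  -- the set defining the infimum
  set Tset : Set ℝ :=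
    (fun p : Fin C × Fin C => quadForm S⁻¹ (μ p.1 - μ p.2)) '' {p | p.1 ≠ p.2} with hTset
  have hne : Tset.Nonempty := by
    refine ⟨quadForm S⁻¹ (μ ⟨0, by omega⟩ - μ ⟨1, by omega⟩), ⟨(⟨0, by omega⟩, ⟨1, by omega⟩), ?_, rfl⟩⟩
    simp only [Set.mem_setOf_eq]
    intro h
    have := congrArg Fin.val h
    simp at this
  have hbdd : BddBelow Tset := by
    refine ⟨0, fun y hy => ?_⟩
    obtain ⟨p, -, rfl⟩ := hy
    exact quadForm_nonneg hpsd _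
  have hρ0 : 0 ≤ ρ := by
    rw [hρdef, rhoStarSq, ← hTset]
    exact le_csInf hne fun y hy => by
      obtain ⟨p, -, rfl⟩ := hy; exact quadForm_nonneg hpsd _
  have hρle : ∀ j : Fin C, j ≠ i → ρ ≤ quadForm S⁻¹ (μ j - μ i) := by
    intro j hj
    rw [hρdef, rhoStarSq, ← hTset]
    exact csInf_le hbdd ⟨(j, i), hj, rfl⟩
  -- sets
  set G : Set (E d) := {x | ∀ j : Fin C, j ≠ i →
      ρ / 2 ≤ quadForm S⁻¹ (x - μ j) - quadForm S⁻¹ (x - μ i)} with hG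
  set bad : Fin C → Set (E d) :=
    fun j => {x : E d | quadForm S⁻¹ (x - μ j) - quadForm S⁻¹ (x - μ i) < ρ / 2} with hbad
  have hsub : Gᶜ ⊆ ⋃ j ∈ Finset.univ.erase i, bad j := by
    intro x hx
    rw [hG] at hx
    simp only [Set.mem_compl_iff, Set.mem_setOf_eq, not_forall] at hx
    obtain ⟨j, hj, hlt⟩ := hx
    refine Set.mem_biUnion (Finset.mem_erase.mpr ⟨hj, Finset.mem_univ j⟩) ?_
    exact not_le.mp hlt
  have hGc : gaussianE d (μ i) S Gᶜ
      ≤ ((C - 1 : ℕ) : ℝ≥0∞) * ENNReal.ofReal (Real.exp (-(ρ / 32))) := by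
    calc gaussianE d (μ i) S Gᶜ ≤ gaussianE d (μ i) S (⋃ j ∈ Finset.univ.erase i, bad j) :=
          measure_mono hsub
      _ ≤ ∑ j ∈ Finset.univ.erase i, gaussianE d (μ i) S (bad j) :=
          measure_biUnion_finset_le _ _
      _ ≤ ∑ _j ∈ Finset.univ.erase i, ENNReal.ofReal (Real.exp (-(ρ / 32))) := by
          refine Finset.sum_le_sum fun j hj => ?_
          exact bad_bound S hS (μ i) (μ j) ρ hρ0 (hρle j (Finset.mem_erase.mp hj).1)
      _ = ((C - 1 : ℕ) : ℝ≥0∞) * ENNReal.ofReal (Real.exp (-(ρ / 32))) := by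
          rw [Finset.sum_const, Finset.card_erase_of_mem (Finset.mem_univ i),
            Finset.card_univ, Fintype.card_fin, nsmul_eq_mul]
  have htot : gaussianE d (μ i) S Set.univ = 1 := by
    rw [gaussianE, withDensity_apply _ MeasurableSet.univ, Measure.restrict_univ]
    exact gauss_norm S hS (μ i)
  have hsplit : (1 : ℝ≥0∞) ≤ gaussianE d (μ i) S G + gaussianE d (μ i) S Gᶜ := by
    calc (1 : ℝ≥0∞) = gaussianE d (μ i) S Set.univ := htot.symm
      _ = gaussianE d (μ i) S (G ∪ Gᶜ) := by rw [Set.union_compl_self]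
      _ ≤ _ := measure_union_le _ _
  -- numeric side
  have hexp : Real.exp (-(1/32 * ρ)) = Real.exp (-(ρ / 32)) := by ring_nf
  have ha0 : 0 ≤ ((C : ℝ) - 1) * Real.exp (-(1/32 * ρ)) := by
    have h2 : (2 : ℝ) ≤ (C : ℝ) := by exact_mod_cast hC
    exact mul_nonneg (by linarith) (Real.exp_pos _).le
  have hKeq : ENNReal.ofReal (((C : ℝ) - 1) * Real.exp (-(1/32 * ρ)))
      = ((C - 1 : ℕ) : ℝ≥0∞) * ENNReal.ofReal (Real.exp (-(ρ / 32))) := by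
    have hc1 : ((C : ℝ) - 1) = ((C - 1 : ℕ) : ℝ) := by
      rw [Nat.cast_sub (by omega)]; norm_num
    rw [ENNReal.ofReal_mul (by rw [hc1]; positivity), hc1, ENNReal.ofReal_natCast, hexp]
  have hfinal : ENNReal.ofReal (1 - ((C : ℝ) - 1) * Real.exp (-(1/32 * ρ)))
      ≤ gaussianE d (μ i) S G := by
    rw [ENNReal.ofReal_sub _ ha0, ENNReal.ofReal_one, hKeq]
    rw [tsub_le_iff_right]
    calc (1 : ℝ≥0∞) ≤ gaussianE d (μ i) S G + gaussianE d (μ i) S Gᶜ := hsplit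
      _ ≤ _ := add_le_add_right hGc _
  exact hfinal

end
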